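/- For λ ∈ (0, 1/2], the distribution G on [0,1]ⁿ supported on the full diagonal {(q,…,q) : q ∈ [0, 2λ]} with uniform density, paired with the linear function Π̄(q) = (v(n)/(2nλ))·∑_j q_j, satisfies: for every point q on the support, G's 'win-probability weighted payoff' Π(q) := (q/(2λ))·v(n) equals Π̄(q,…,q); and for any point q = (q₁,…,q_n) with all q_j ≤ 2λ and order statistics q^m_1 ≤ … ≤ q^m_n, the payoff ∑_{j=1}^n ((q^m_j − q^m_{j−1})/(2λ))·v(n − j + 1) is at most (v(n)/(2nλ))·∑_j q_j, where v is strictly convex increasing with v(0)=0 and q^m_0 = 0. -/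

import Mathlib

lemma delta_mono (v : ℕ → ℝ)
    (hconv : ∀ k : ℕ, 1 ≤ k → v (k+1) - v k > v k - v (k-1)) :
    Monotone (fun i => v (i+1) - v i) := by
  apply monotone_nat_of_le_succ
  intro i
  have := hconv (i+1) (by omega)
  simpa using this.le

lemma vk_le (v : ℕ → ℝ)
    (hconv : ∀ k : ℕ, 1 ≤ k → v (k+1) - v k > v k - v (k-1))
    (h0 : v 0 = 0) {k n : ℕ} (hkn : k ≤ n) :
    (n:ℝ) * v k ≤ (k:ℝ) * v n := by
  have hd := delta_mono v hconv
  have hv : ∀ m : ℕ, v m = ∑ i ∈ Finset.range m, (v (i+1) - v i) := by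
    intro m; rw [Finset.sum_range_sub, h0, sub_zero]
  rcases Nat.eq_zero_or_pos k with hk | hk
  · subst hk; simp [h0]
  set c : ℝ := v ((k-1)+1) - v (k-1) with hc
  have hA : ∑ i ∈ Finset.range k, (v (i+1) - v i) ≤ (k:ℝ) * c := by
    have := Finset.sum_le_card_nsmul (Finset.range k)
      (fun i => v (i+1) - v i) c (by
        intro i hi
        simp only [Finset.mem_range] at hi
        exact hd (by omega : i ≤ k - 1))
    simpa [nsmul_eq_mul] using this
  have hB : ((n - k : ℕ):ℝ) * c ≤ ∑ i ∈ Finset.Ico k n, (v (i+1) - v i) := by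
    have := Finset.card_nsmul_le_sum (Finset.Ico k n)
      (fun i => v (i+1) - v i) c (by
        intro i hi
        simp only [Finset.mem_Ico] at hi
        exact hd (by omega : k - 1 ≤ i))
    simpa [nsmul_eq_mul, Nat.card_Ico] using this
  have hsplit : ∑ i ∈ Finset.range k, (v (i+1) - v i)
      + ∑ i ∈ Finset.Ico k n, (v (i+1) - v i)
      = ∑ i ∈ Finset.range n, (v (i+1) - v i) :=
    Finset.sum_range_add_sum_Ico _ hkn
  have hcast : ((n - k : ℕ):ℝ) = (n:ℝ) - (k:ℝ) := by
    push_cast [Nat.cast_sub hkn]; ring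
  rw [hv k, hv n, ← hsplit]
  set A := ∑ i ∈ Finset.range k, (v (i+1) - v i)
  set B := ∑ i ∈ Finset.Ico k n, (v (i+1) - v i)
  rw [hcast] at hB
  have hkR : (0:ℝ) ≤ (k:ℝ) := by positivity
  have hnk : (0:ℝ) ≤ (n:ℝ) - (k:ℝ) := by
    have : (k:ℝ) ≤ (n:ℝ) := by exact_mod_cast hkn
    linarith
  nlinarith [mul_le_mul_of_nonneg_left hA hnk, mul_le_mul_of_nonneg_left hB hkR]

lemma tel_sum (q : ℕ → ℝ) (h0 : q 0 = 0) (n : ℕ) :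
    ∑ j ∈ Finset.Icc 1 n, (q j - q (j-1)) = q n := by
  induction n with
  | zero => simp [h0]
  | succ n ih =>
    rw [Finset.sum_Icc_succ_top (by omega), ih]
    simp only [Nat.add_sub_cancel]
    ring

lemma abel_eq (q : ℕ → ℝ) (h0 : q 0 = 0) (n : ℕ) :
    ∑ j ∈ Finset.Icc 1 n, (q j - q (j-1)) * ((n:ℝ) - j + 1)
      = ∑ j ∈ Finset.Icc 1 n, q j := by
  induction n with
  | zero => simp
  | succ n ih =>
    rw [Finset.sum_Icc_succ_top (by omega), Finset.sum_Icc_succ_top (by omega)]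
    have hcongr : ∀ j ∈ Finset.Icc 1 n,
        (q j - q (j-1)) * (((n+1 : ℕ):ℝ) - j + 1)
        = (q j - q (j-1)) * ((n:ℝ) - j + 1) + (q j - q (j-1)) := by
      intro j hj; push_cast; ring
    rw [Finset.sum_congr rfl hcongr, Finset.sum_add_distrib, ih,
      tel_sum q h0 n]
    simp only [Nat.add_sub_cancel]
    push_cast
    ring

theorem stmt_17 (n : ℕ) (hn : 1 ≤ n) (lam : ℝ) (hl0 : 0 < lam) (hl : lam ≤ 1/2)
    (v : ℕ → ℝ)
    (hconv : ∀ k : ℕ, 1 ≤ k → v (k+1) - v k > v k - v (k-1))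
    (hmono : StrictMono v) (h0 : v 0 = 0) :
    (∀ q ∈ Set.Icc (0:ℝ) (2*lam),
      (q/(2*lam)) * v n = (v n/(2*n*lam)) * (n*q)) ∧
    ∀ q : ℕ → ℝ, q 0 = 0 → (∀ j k, j ≤ k → k ≤ n → q j ≤ q k) →
      (∀ j ≤ n, q j ≤ 2*lam) →
      (∑ j ∈ Finset.Icc 1 n, ((q j - q (j-1))/(2*lam)) * v (n - j + 1)) ≤
        (v n/(2*n*lam)) * ∑ j ∈ Finset.Icc 1 n, q j := by
  have hn0 : (n:ℝ) ≠ 0 := by positivity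
  have hnpos : (0:ℝ) < (n:ℝ) := by positivity
  have hlam : lam ≠ 0 := ne_of_gt hl0
  constructor
  · intro q hq
    field_simp
  · intro q hq0 hmon hub
    have key : ∑ j ∈ Finset.Icc 1 n, (q j - q (j-1)) * v (n - j + 1)
        ≤ (v n / n) * ∑ j ∈ Finset.Icc 1 n, q j := by
      have step1 : ∀ j ∈ Finset.Icc 1 n, (q j - q (j-1)) * v (n - j + 1)
          ≤ (q j - q (j-1)) * (((n:ℝ) - j + 1) / n * v n) := by
        intro j hj
        simp only [Finset.mem_Icc] at hj
        have hqj : 0 ≤ q j - q (j-1) :=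
          sub_nonneg.2 (hmon (j-1) j (by omega) hj.2)
        apply mul_le_mul_of_nonneg_left _ hqj
        have h := vk_le v hconv h0 (show n - j + 1 ≤ n by omega)
        have hcast : ((n - j + 1 : ℕ):ℝ) = (n:ℝ) - j + 1 := by
          push_cast [Nat.cast_sub hj.2]; ring
        rw [hcast] at h
        rw [div_mul_eq_mul_div, le_div_iff₀ hnpos]
        nlinarith [h]
      calc ∑ j ∈ Finset.Icc 1 n, (q j - q (j-1)) * v (n - j + 1)
          ≤ ∑ j ∈ Finset.Icc 1 n,
              (q j - q (j-1)) * (((n:ℝ) - j + 1) / n * v n) :=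
            Finset.sum_le_sum step1
        _ = (v n / n) * ∑ j ∈ Finset.Icc 1 n,
              (q j - q (j-1)) * ((n:ℝ) - j + 1) := by
            rw [Finset.mul_sum]
            refine Finset.sum_congr rfl fun j hj => ?_
            ring
        _ = (v n / n) * ∑ j ∈ Finset.Icc 1 n, q j := by
            rw [abel_eq q hq0 n]
    have hrw : ∀ j ∈ Finset.Icc 1 n,
        ((q j - q (j-1))/(2*lam)) * v (n - j + 1)
        = (1/(2*lam)) * ((q j - q (j-1)) * v (n - j + 1)) := by
      intro j hj; ring
    rw [Finset.sum_congr rfl hrw, ← Finset.mul_sum]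
    have hrhs : v n/(2*n*lam) * ∑ j ∈ Finset.Icc 1 n, q j
        = (1/(2*lam)) * ((v n / n) * ∑ j ∈ Finset.Icc 1 n, q j) := by
      field_simp
    rw [hrhs]
    exact mul_le_mul_of_nonneg_left key (by positivity)
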